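/- Let L be a finite lattice, let (a,b) be a decoration site of L, and let u and v be two distinct upper covers of a. Then b = u ⊔ v and a = u ⊓ v. -/
import Mathlib


/-- An element of a finite lattice is *doubly irreducible* if it has exactly one
upper cover and exactly one lower cover. -/
def DoublyIrreducible {α : Type*} [Lattice α] (x : α) : Prop :=
  (∃! u, x ⋖ u) ∧ (∃! l, l ⋖ x)

/-- A *decoration site* of a lattice is a pair `(a, b)` such that the set of upper
covers of `a` equals the set of lower covers of `b`, and `a` has at least two
upper covers. -/
def DecorationSite {α : Type*} [Lattice α] (a b : α) : Prop :=
  {x | a ⋖ x} = {x | x ⋖ b} ∧ 2 ≤ {x | a ⋖ x}.ncard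

/-- The doubly irreducible elements strictly between `a` and `b`. -/
def siteTrinkets {α : Type*} [Lattice α] (a b : α) : Set α :=
  {x | DoublyIrreducible x ∧ a < x ∧ x < b}

/-- A *trinket-removal set* of a lattice: for every decoration site `(a, b)` it
contains exactly `min d (k - 2)` doubly irreducible elements strictly between
`a` and `b` (where `d` is the number of doubly irreducible elements strictly
between `a` and `b`, and `k` is the number of upper covers of `a`), and it
contains no other elements. -/
def TrinketRemovalSet {α : Type*} [Lattice α] (T : Set α) : Prop :=
  (∀ a b : α, DecorationSite a b →
      (T ∩ siteTrinkets a b).ncard =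
        min (siteTrinkets a b).ncard ({x | a ⋖ x}.ncard - 2)) ∧
  ∀ t ∈ T, ∃ a b : α, DecorationSite a b ∧ t ∈ siteTrinkets a b

/-- A finite lattice is a *rack* if `min d (k - 2) = 0` for every decoration site. -/
def IsRack (α : Type*) [Lattice α] : Prop :=
  ∀ a b : α, DecorationSite a b →
    min (siteTrinkets a b).ncard ({x | a ⋖ x}.ncard - 2) = 0

/-- A *knot* of a finite lattice is an element distinct from top and bottom that
is comparable with every element. -/
def IsKnot {α : Type*} [Lattice α] (x : α) : Prop :=
  (∃ y, x < y) ∧ (∃ y, y < x) ∧ ∀ y, x ≤ y ∨ y ≤ x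

/-- Birkhoff's semimodularity condition: whenever distinct `x` and `y` both
cover a common element `a`, the join `x ⊔ y` covers both `x` and `y`. -/
def Semimodular (α : Type*) [Lattice α] : Prop :=
  ∀ a x y : α, x ≠ y → a ⋖ x → a ⋖ y → x ⋖ x ⊔ y ∧ y ⋖ x ⊔ y

/-- The modular law: for all `x ≤ z`, `x ⊔ (y ⊓ z) = (x ⊔ y) ⊓ z`. -/
def ModularLaw (α : Type*) [Lattice α] : Prop :=
  ∀ x y z : α, x ≤ z → x ⊔ (y ⊓ z) = (x ⊔ y) ⊓ z

/-- If `(a, b)` is a decoration site and `u`, `v` are two distinct upper covers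
of `a`, then `b = u ⊔ v` and `a = u ⊓ v`. -/
theorem stmt_2 {α : Type*} [Lattice α] [Finite α] [Nonempty α] {a b u v : α}
    (hab : DecorationSite a b) (hu : a ⋖ u) (hv : a ⋖ v) (huv : u ≠ v) :
    b = u ⊔ v ∧ a = u ⊓ v := by
  obtain ⟨hset, -⟩ := hab
  have hub : u ⋖ b := (Set.ext_iff.mp hset u).mp hu
  have hvb : v ⋖ b := (Set.ext_iff.mp hset v).mp hv
  constructor
  · have h1 : u < u ⊔ v := lt_of_le_of_ne le_sup_left (by
      intro h
      have hvle : v ≤ u := h ▸ le_sup_right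
      rcases lt_or_eq_of_le hvle with h' | h'
      · exact hu.2 hv.1 h'
      · exact huv h'.symm)
    have h2 : u ⊔ v ≤ b := sup_le hub.le hvb.le
    rcases lt_or_eq_of_le h2 with h' | h'
    · exact (hub.2 h1 h').elim
    · exact h'.symm
  · have h1 : u ⊓ v < u := lt_of_le_of_ne inf_le_left (by
      intro h
      have hule : u ≤ v := by rw [← h]; exact inf_le_right
      rcases lt_or_eq_of_le hule with h' | h'
      · exact hv.2 hu.1 h'
      · exact huv h')
    have h2 : a ≤ u ⊓ v := le_inf hu.le hv.le
    rcases lt_or_eq_of_le h2 with h' | h'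
    · exact (hu.2 h' h1).elim
    · exact h'
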